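/- Let m ≥ 2 and k ≥ 2, and let W_{m+1}^k be the windmill graph obtained by taking k copies of the complete graph K_{m+1} sharing exactly one common vertex (equivalently, the join of a single vertex with the disjoint union of k copies of K_m). Then the spectrum of the eccentricity matrix ε(W_{m+1}^k) consists of the eigenvalue −2m with multiplicity k−1, the eigenvalue 0 with multiplicity k(m−1), and the two simple eigenvalues m(k−1) − √(m²(k−1)² + km) and m(k−1) + √(m²(k−1)² + km). -/

import Mathlib

open Finset Polynomial

noncomputable def ecc {V : Type*} [Fintype V] (G : SimpleGraph V) (u : V) : ℕ :=
  Finset.univ.sup (G.dist u)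

noncomputable def eccMatrix {V : Type*} [Fintype V] (G : SimpleGraph V) :
    Matrix V V ℝ := fun u v =>
  if G.dist u v = min (ecc G u) (ecc G v) then (G.dist u v : ℝ) else 0

theorem eccMatrix_isHermitian {V : Type*} [Fintype V] (G : SimpleGraph V) :
    (eccMatrix G).IsHermitian := by
  unfold Matrix.IsHermitian
  ext u v
  simp only [Matrix.conjTranspose_apply, eccMatrix, star_trivial]
  rw [SimpleGraph.dist_comm, min_comm]

/-- Number of positive eigenvalues (with multiplicity) of a real symmetric matrix. -/
noncomputable def posEigCount {V : Type*} [Fintype V] [DecidableEq V]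
    {A : Matrix V V ℝ} (hA : A.IsHermitian) : ℕ :=
  (Finset.univ.filter fun i => 0 < hA.eigenvalues i).card

/-- The join of two simple graphs: disjoint union plus all edges in between. -/
def graphJoin {α β : Type*} (G : SimpleGraph α) (H : SimpleGraph β) :
    SimpleGraph (α ⊕ β) where
  Adj x y := match x, y with
    | Sum.inl a, Sum.inl b => G.Adj a b
    | Sum.inr a, Sum.inr b => H.Adj a b
    | _, _ => True
  symm := ⟨by rintro (a|a) (b|b) h <;> first | exact G.adj_symm h | exact H.adj_symm h | trivial⟩
  loopless := ⟨by rintro (a|a) h <;> first | exact G.ne_of_adj h rfl | exact H.ne_of_adj h rfl⟩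

/-- The disjoint union of two simple graphs. -/
def graphSum {α β : Type*} (G : SimpleGraph α) (H : SimpleGraph β) :
    SimpleGraph (α ⊕ β) where
  Adj x y := match x, y with
    | Sum.inl a, Sum.inl b => G.Adj a b
    | Sum.inr a, Sum.inr b => H.Adj a b
    | _, _ => False
  symm := ⟨by rintro (a|a) (b|b) h <;> first | exact G.adj_symm h | exact H.adj_symm h | trivial⟩
  loopless := ⟨by rintro (a|a) h <;> first | exact G.ne_of_adj h rfl | exact H.ne_of_adj h rfl⟩

/-- Disjoint union of blocks indexed by `ι`; block `i` has `r i` vertices and is a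
clique when `P i` holds and a coclique (independent set) otherwise. -/
def blocksGraph {ι : Type*} (r : ι → ℕ) (P : ι → Prop) :
    SimpleGraph (Σ i, Fin (r i)) where
  Adj x y := x ≠ y ∧ x.1 = y.1 ∧ P x.1
  symm := ⟨by rintro x y ⟨h1, h2, h3⟩; exact ⟨h1.symm, h2.symm, h2 ▸ h3⟩⟩
  loopless := ⟨fun x h => h.1 rfl⟩

section Windmill

variable (m k : ℕ)

abbrev WG : SimpleGraph (Unit ⊕ Σ _ : Fin k, Fin m) :=
  graphJoin (⊤ : SimpleGraph Unit) (blocksGraph (fun _ : Fin k => m) (fun _ => True))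

variable {m k}

lemma wg_adj_lr (u : Unit) (x : Σ _ : Fin k, Fin m) : (WG m k).Adj (.inl u) (.inr x) := by
  show True; trivial

lemma wg_adj_rl (u : Unit) (x : Σ _ : Fin k, Fin m) : (WG m k).Adj (.inr x) (.inl u) := by
  show True; trivial

lemma wg_adj_rr {x y : Σ _ : Fin k, Fin m} :
    (WG m k).Adj (.inr x) (.inr y) ↔ x ≠ y ∧ x.1 = y.1 := by
  show (x ≠ y ∧ x.1 = y.1 ∧ True) ↔ _
  tauto

lemma wg_dist_lr (u : Unit) (x : Σ _ : Fin k, Fin m) :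
    (WG m k).dist (.inl u) (.inr x) = 1 :=
  SimpleGraph.dist_eq_one_iff_adj.mpr (wg_adj_lr u x)

lemma wg_dist_rl (u : Unit) (x : Σ _ : Fin k, Fin m) :
    (WG m k).dist (.inr x) (.inl u) = 1 :=
  SimpleGraph.dist_eq_one_iff_adj.mpr (wg_adj_rl u x)

lemma wg_dist_ll (u v : Unit) : (WG m k).dist (.inl u) (.inl v) = 0 := by
  cases u; cases v; exact SimpleGraph.dist_self

def wg_walk_rr (x y : Σ _ : Fin k, Fin m) :
    (WG m k).Walk (.inr x) (.inr y) :=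
  SimpleGraph.Walk.cons (wg_adj_rl () x) (SimpleGraph.Walk.cons (wg_adj_lr () y) .nil)

lemma wg_dist_rr_le (x y : Σ _ : Fin k, Fin m) :
    (WG m k).dist (.inr x) (.inr y) ≤ 2 := by
  exact SimpleGraph.dist_le (wg_walk_rr x y)

lemma wg_dist_rr_same {x y : Σ _ : Fin k, Fin m} (hne : x ≠ y) (h1 : x.1 = y.1) :
    (WG m k).dist (.inr x) (.inr y) = 1 :=
  SimpleGraph.dist_eq_one_iff_adj.mpr (wg_adj_rr.mpr ⟨hne, h1⟩)

lemma wg_dist_rr_diff {x y : Σ _ : Fin k, Fin m} (h1 : x.1 ≠ y.1) :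
    (WG m k).dist (.inr x) (.inr y) = 2 := by
  have hle := wg_dist_rr_le (m := m) (k := k) x y
  have hne : (Sum.inr x : Unit ⊕ Σ _ : Fin k, Fin m) ≠ Sum.inr y := by
    intro h; exact h1 (congrArg Sigma.fst (Sum.inr.inj h))
  have h0 : (WG m k).dist (.inr x) (.inr y) ≠ 0 := by
    intro h
    rcases SimpleGraph.dist_eq_zero_iff_eq_or_not_reachable.mp h with h' | h'
    · exact hne h'
    · exact h' ⟨wg_walk_rr x y⟩
  have hn1 : (WG m k).dist (.inr x) (.inr y) ≠ 1 := by
    intro h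
    exact h1 (wg_adj_rr.mp (SimpleGraph.dist_eq_one_iff_adj.mp h)).2
  omega

variable (hm : 2 ≤ m) (hk : 2 ≤ k)
include hm hk

lemma wg_ecc_l (u : Unit) : ecc (WG m k) (.inl u) = 1 := by
  apply le_antisymm
  · apply Finset.sup_le
    rintro (v | x) -
    · simp [wg_dist_ll]
    · simp [wg_dist_lr]
  · have := Finset.le_sup (f := (WG m k).dist (.inl u))
      (Finset.mem_univ (Sum.inr ⟨⟨0, by omega⟩, ⟨0, by omega⟩⟩))
    rwa [wg_dist_lr] at this

lemma wg_ecc_r (x : Σ _ : Fin k, Fin m) : ecc (WG m k) (.inr x) = 2 := by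
  apply le_antisymm
  · apply Finset.sup_le
    rintro (v | y) -
    · simp [wg_dist_rl]
    · exact wg_dist_rr_le x y
  · set i' : Fin k := if x.1 = ⟨0, by omega⟩ then ⟨1, by omega⟩ else ⟨0, by omega⟩ with hi'
    have hne : x.1 ≠ i' := by
      rcases eq_or_ne x.1 ⟨0, by omega⟩ with h | h
      · simp only [hi', if_pos h, h]
        simp [Fin.ext_iff]
      · simp [hi', h]
    have := Finset.le_sup (f := (WG m k).dist (.inr x))
      (Finset.mem_univ (Sum.inr ⟨i', ⟨0, by omega⟩⟩))
    rwa [wg_dist_rr_diff hne] at this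

end Windmill

section Matrices

variable (m k : ℕ)

abbrev BIdx := Σ _ : Fin k, Fin m
abbrev VIdx := Unit ⊕ BIdx m k

noncomputable def Mmat : Matrix (VIdx m k) (VIdx m k) ℝ := fun u v =>
  match u, v with
  | Sum.inl _, Sum.inl _ => 0
  | Sum.inl _, Sum.inr _ => 1
  | Sum.inr _, Sum.inl _ => 1
  | Sum.inr x, Sum.inr y => if x.1 = y.1 then 0 else 2

variable {m k}

lemma eccMatrix_eq (hm : 2 ≤ m) (hk : 2 ≤ k) : eccMatrix (WG m k) = Mmat m k := by
  ext u v
  unfold eccMatrix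
  rcases u with u | x <;> rcases v with v | y
  · simp [Mmat, wg_dist_ll, wg_ecc_l hm hk]
  · simp [Mmat, wg_dist_lr, wg_ecc_l hm hk, wg_ecc_r hm hk]
  · simp [Mmat, wg_dist_rl, wg_ecc_l hm hk, wg_ecc_r hm hk]
  · simp only [Mmat, wg_ecc_r hm hk, min_self]
    rcases eq_or_ne x.1 y.1 with h1 | h1
    · rcases eq_or_ne x y with h | h
      · subst h; simp [SimpleGraph.dist_self]
      · simp [wg_dist_rr_same h h1, h1]
    · simp [wg_dist_rr_diff h1, h1]

end Matrices

section PQ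

variable (m k : ℕ) [NeZero m] [NeZero k]

/-- Columns: `inl` ↦ e_center; `inr ⟨0,0⟩` ↦ all-ones on blades; `inr ⟨i,0⟩` (i ≠ 0) ↦
blade-sum difference s₀ - sᵢ; `inr ⟨i,j⟩` (j ≠ 0) ↦ e_{i,0} - e_{i,j}. -/
noncomputable def Pmat : Matrix (VIdx m k) (VIdx m k) ℝ := fun u v =>
  match u, v with
  | Sum.inl _, Sum.inl _ => 1
  | Sum.inl _, Sum.inr _ => 0
  | Sum.inr _, Sum.inl _ => 0
  | Sum.inr v, Sum.inr x =>
      if x.2 = 0 then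
        (if x.1 = 0 then 1
         else (if v.1 = 0 then 1 else 0) - (if v.1 = x.1 then 1 else 0))
      else
        (if v.1 = x.1 ∧ v.2 = 0 then 1 else 0) - (if v = x then 1 else 0)

noncomputable def Qmat : Matrix (VIdx m k) (VIdx m k) ℝ := fun u v =>
  match u, v with
  | Sum.inl _, Sum.inl _ => 1
  | Sum.inl _, Sum.inr _ => 0
  | Sum.inr _, Sum.inl _ => 0
  | Sum.inr y, Sum.inr v =>
      if y.2 = 0 then
        (if y.1 = 0 then ((k : ℝ) * m)⁻¹
         else ((k : ℝ) * m)⁻¹ - (if v.1 = y.1 then (m : ℝ)⁻¹ else 0))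
      else
        (if v.1 = y.1 then (m : ℝ)⁻¹ else 0) - (if v = y then 1 else 0)

variable {m k}

lemma sum_if_fst (c : Fin k) (f : ℝ) :
    ∑ v : BIdx m k, (if v.1 = c then f else 0) = m * f := by
  rw [← Finset.univ_sigma_univ, Finset.sum_sigma]
  have : ∀ i : Fin k, (∑ _j : Fin m, if i = c then f else 0)
      = if i = c then (m : ℝ) * f else 0 := by
    intro i
    by_cases h : i = c <;> simp [h, Finset.sum_const, mul_comm]
  simp only [this]
  simp [Finset.sum_ite_eq']

lemma sum_if_pt (w : BIdx m k) (f : ℝ) :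
    ∑ v : BIdx m k, (if v = w then f else 0) = f := by
  simp [Finset.sum_ite_eq']

lemma sum_if_fst0 (c : Fin k) (f : ℝ) :
    ∑ v : BIdx m k, (if v.1 = c ∧ v.2 = 0 then f else 0) = f := by
  rw [← Finset.univ_sigma_univ, Finset.sum_sigma]
  have : ∀ i : Fin k, (∑ j : Fin m, if i = c ∧ j = 0 then f else 0)
      = if i = c then f else 0 := by
    intro i
    by_cases h : i = c <;> simp [h, Finset.sum_ite_eq']
  simp only [this]
  simp [Finset.sum_ite_eq']

lemma sum_const_B (f : ℝ) : ∑ _v : BIdx m k, f = k * m * f := by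
  simp only [Finset.sum_const, Finset.card_univ, Fintype.card_sigma, Finset.sum_const,
    Fintype.card_fin, nsmul_eq_mul]
  push_cast
  ring

end PQ

section QP
variable {m k : ℕ} [NeZero m] [NeZero k]

lemma bidx_ext_iff {y x : BIdx m k} : y = x ↔ y.1 = x.1 ∧ y.2 = x.2 := by
  constructor
  · rintro rfl; exact ⟨rfl, rfl⟩
  · rintro ⟨h1, h2⟩
    rcases y with ⟨a, b⟩; rcases x with ⟨c, d⟩
    simp only at h1 h2
    subst h1; subst h2; rfl

set_option maxHeartbeats 2000000 in
lemma QP_eq_one : Qmat m k * Pmat m k = 1 := by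
  have hm0 : (m : ℝ) ≠ 0 := Nat.cast_ne_zero.mpr (NeZero.ne m)
  have hk0 : (k : ℝ) ≠ 0 := Nat.cast_ne_zero.mpr (NeZero.ne k)
  ext u w
  rw [Matrix.mul_apply, Fintype.sum_sum_type]
  rcases u with u | y <;> rcases w with w | x
  · simp [Qmat, Pmat, Matrix.one_apply]
  · simp [Qmat, Pmat]
  · simp [Qmat, Pmat]
  · simp only [Qmat, Pmat, Matrix.one_apply, Sum.inr.injEq, zero_mul, Finset.sum_const,
      smul_zero, zero_add]
    by_cases hy2 : y.snd = 0 <;> by_cases hx2 : x.snd = 0 <;>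
      simp only [hy2, hx2, if_pos, if_neg, if_true, if_false]
    · -- y.2 = 0, x.2 = 0
      by_cases hy1 : y.fst = 0 <;> by_cases hx1 : x.fst = 0 <;>
        simp only [hy1, hx1, if_pos, if_neg, if_true, if_false]
      · -- (b2, b2)
        have hyx : y = x := bidx_ext_iff.mpr ⟨hy1.trans hx1.symm, hy2.trans hx2.symm⟩
        rw [if_pos hyx, sum_const_B]
        field_simp <;> ring
      · -- (b2, w)
        have hyx : ¬ y = x := fun h => hx1 (h ▸ hy1)
        rw [if_neg hyx]
        have hv : ∀ v : BIdx m k,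
            (↑k * ↑m : ℝ)⁻¹ * ((if v.fst = 0 then 1 else 0) - if v.fst = x.fst then 1 else 0)
            = (if v.fst = (0 : Fin k) then (↑k * ↑m : ℝ)⁻¹ else 0)
              - (if v.fst = x.fst then (↑k * ↑m : ℝ)⁻¹ else 0) := by
          intro v; split_ifs <;> simp_all <;> ring
        rw [Finset.sum_congr rfl fun v _ => hv v, Finset.sum_sub_distrib,
          sum_if_fst, sum_if_fst]
        ring
      · -- (w, b2)
        have hyx : ¬ y = x := fun h => hy1 (by rw [h, hx1])
        rw [if_neg hyx]
        have hv : ∀ v : BIdx m k,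
            ((↑k * ↑m : ℝ)⁻¹ - (if v.fst = y.fst then (↑m : ℝ)⁻¹ else 0)) * 1
            = (↑k * ↑m : ℝ)⁻¹ - (if v.fst = y.fst then (↑m : ℝ)⁻¹ else 0) := by
          intro v; ring
        rw [Finset.sum_congr rfl fun v _ => hv v, Finset.sum_sub_distrib,
          sum_const_B, sum_if_fst]
        field_simp <;> ring
      · -- (w, w)
        by_cases hxy : y.fst = x.fst
        · have hyx : y = x := bidx_ext_iff.mpr ⟨hxy, hy2.trans hx2.symm⟩
          rw [if_pos hyx]
          have hv : ∀ v : BIdx m k,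
              ((↑k * ↑m : ℝ)⁻¹ - (if v.fst = y.fst then (↑m : ℝ)⁻¹ else 0)) *
                ((if v.fst = 0 then 1 else 0) - if v.fst = x.fst then 1 else 0)
              = (if v.fst = (0 : Fin k) then (↑k * ↑m : ℝ)⁻¹ else 0)
                + (if v.fst = x.fst then (↑m : ℝ)⁻¹ - (↑k * ↑m : ℝ)⁻¹ else 0) := by
            intro v; split_ifs <;> simp_all <;> ring
          rw [Finset.sum_congr rfl fun v _ => hv v, Finset.sum_add_distrib,
            sum_if_fst, sum_if_fst]
          field_simp <;> ring
        · have hyx : ¬ y = x := fun h => hxy (by rw [h])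
          rw [if_neg hyx]
          have hv : ∀ v : BIdx m k,
              ((↑k * ↑m : ℝ)⁻¹ - (if v.fst = y.fst then (↑m : ℝ)⁻¹ else 0)) *
                ((if v.fst = 0 then 1 else 0) - if v.fst = x.fst then 1 else 0)
              = (if v.fst = (0 : Fin k) then (↑k * ↑m : ℝ)⁻¹ else 0)
                - (if v.fst = x.fst then (↑k * ↑m : ℝ)⁻¹ else 0) := by
            intro v; split_ifs <;> simp_all <;> ring
          rw [Finset.sum_congr rfl fun v _ => hv v, Finset.sum_sub_distrib,
            sum_if_fst, sum_if_fst]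
          ring
    · -- y.2 = 0, x.2 ≠ 0
      have hyx : ¬ y = x := fun h => hx2 (h ▸ hy2)
      rw [if_neg hyx]
      by_cases hy1 : y.fst = 0 <;> simp only [hy1, if_pos, if_neg, if_true, if_false]
      · -- (b2, u)
        have hv : ∀ v : BIdx m k,
            (↑k * ↑m : ℝ)⁻¹ *
              ((if v.fst = x.fst ∧ v.snd = 0 then 1 else 0) - if v = x then 1 else 0)
            = (if v.fst = x.fst ∧ v.snd = (0 : Fin m) then (↑k * ↑m : ℝ)⁻¹ else 0)
              - (if v = x then (↑k * ↑m : ℝ)⁻¹ else 0) := by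
          intro v; split_ifs <;> simp_all <;> ring
        rw [Finset.sum_congr rfl fun v _ => hv v, Finset.sum_sub_distrib,
          sum_if_fst0, sum_if_pt]
        ring
      · -- (w, u)
        by_cases hxy : x.fst = y.fst
        · have hv : ∀ v : BIdx m k,
              ((↑k * ↑m : ℝ)⁻¹ - (if v.fst = y.fst then (↑m : ℝ)⁻¹ else 0)) *
                ((if v.fst = x.fst ∧ v.snd = 0 then 1 else 0) - if v = x then 1 else 0)
              = (if v.fst = x.fst ∧ v.snd = (0 : Fin m) then (↑k * ↑m : ℝ)⁻¹ - (↑m : ℝ)⁻¹ else 0)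
                - (if v = x then (↑k * ↑m : ℝ)⁻¹ - (↑m : ℝ)⁻¹ else 0) := by
            intro v; split_ifs <;> simp_all <;> ring
          rw [Finset.sum_congr rfl fun v _ => hv v, Finset.sum_sub_distrib,
            sum_if_fst0, sum_if_pt]
          ring
        · have hv : ∀ v : BIdx m k,
              ((↑k * ↑m : ℝ)⁻¹ - (if v.fst = y.fst then (↑m : ℝ)⁻¹ else 0)) *
                ((if v.fst = x.fst ∧ v.snd = 0 then 1 else 0) - if v = x then 1 else 0)
              = (if v.fst = x.fst ∧ v.snd = (0 : Fin m) then (↑k * ↑m : ℝ)⁻¹ else 0)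
                - (if v = x then (↑k * ↑m : ℝ)⁻¹ else 0) := by
            intro v; split_ifs <;> simp_all <;> ring
          rw [Finset.sum_congr rfl fun v _ => hv v, Finset.sum_sub_distrib,
            sum_if_fst0, sum_if_pt]
          ring
    · -- y.2 ≠ 0, x.2 = 0
      have hyx : ¬ y = x := fun h => hy2 (h ▸ hx2)
      rw [if_neg hyx]
      by_cases hx1 : x.fst = 0 <;> simp only [hx1, if_pos, if_neg, if_true, if_false]
      · -- (u, b2)
        have hv : ∀ v : BIdx m k,
            ((if v.fst = y.fst then (↑m : ℝ)⁻¹ else 0) - (if v = y then 1 else 0)) * 1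
            = (if v.fst = y.fst then (↑m : ℝ)⁻¹ else 0) - (if v = y then (1:ℝ) else 0) := by
          intro v; ring
        rw [Finset.sum_congr rfl fun v _ => hv v, Finset.sum_sub_distrib,
          sum_if_fst, sum_if_pt]
        field_simp <;> ring
      · -- (u, w)
        by_cases hy1 : y.fst = 0 <;> by_cases hxy : y.fst = x.fst
        · exact absurd (hy1 ▸ hxy) (fun h => hx1 h.symm)
        · have hv : ∀ v : BIdx m k,
              ((if v.fst = y.fst then (↑m : ℝ)⁻¹ else 0) - (if v = y then 1 else 0)) *
                ((if v.fst = 0 then 1 else 0) - if v.fst = x.fst then 1 else 0)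
              = (if v.fst = (0 : Fin k) then (↑m : ℝ)⁻¹ else 0) - (if v = y then (1:ℝ) else 0) := by
            intro v; split_ifs <;> simp_all <;> ring
          rw [Finset.sum_congr rfl fun v _ => hv v, Finset.sum_sub_distrib,
            sum_if_fst, sum_if_pt]
          field_simp <;> ring
        · have hv : ∀ v : BIdx m k,
              ((if v.fst = y.fst then (↑m : ℝ)⁻¹ else 0) - (if v = y then 1 else 0)) *
                ((if v.fst = 0 then 1 else 0) - if v.fst = x.fst then 1 else 0)
              = (if v = y then (1:ℝ) else 0) - (if v.fst = x.fst then (↑m : ℝ)⁻¹ else 0) := by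
            intro v; split_ifs <;> simp_all <;> ring
          rw [Finset.sum_congr rfl fun v _ => hv v, Finset.sum_sub_distrib,
            sum_if_pt, sum_if_fst]
          field_simp <;> ring
        · have hv : ∀ v : BIdx m k,
              ((if v.fst = y.fst then (↑m : ℝ)⁻¹ else 0) - (if v = y then 1 else 0)) *
                ((if v.fst = 0 then 1 else 0) - if v.fst = x.fst then 1 else 0)
              = 0 := by
            intro v; split_ifs <;> simp_all <;> ring
          rw [Finset.sum_congr rfl fun v _ => hv v]
          simp
    · -- y.2 ≠ 0, x.2 ≠ 0  (u, u)
      by_cases hyx : y = x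
      · rw [if_pos hyx]
        have hv : ∀ v : BIdx m k,
            ((if v.fst = y.fst then (↑m : ℝ)⁻¹ else 0) - (if v = y then 1 else 0)) *
              ((if v.fst = x.fst ∧ v.snd = 0 then 1 else 0) - if v = x then 1 else 0)
            = (if v.fst = x.fst ∧ v.snd = (0 : Fin m) then (↑m : ℝ)⁻¹ else 0)
              + (if v = x then 1 - (↑m : ℝ)⁻¹ else 0) := by
          intro v; subst hyx; split_ifs <;> simp_all <;> ring
        rw [Finset.sum_congr rfl fun v _ => hv v, Finset.sum_add_distrib,
          sum_if_fst0, sum_if_pt]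
        field_simp <;> ring
      · rw [if_neg hyx]
        by_cases hxy : y.fst = x.fst
        · have hv : ∀ v : BIdx m k,
              ((if v.fst = y.fst then (↑m : ℝ)⁻¹ else 0) - (if v = y then 1 else 0)) *
                ((if v.fst = x.fst ∧ v.snd = 0 then 1 else 0) - if v = x then 1 else 0)
              = (if v.fst = x.fst ∧ v.snd = (0 : Fin m) then (↑m : ℝ)⁻¹ else 0)
                - (if v = x then (↑m : ℝ)⁻¹ else 0) := by
            intro v; split_ifs <;> simp_all <;> ring
          rw [Finset.sum_congr rfl fun v _ => hv v, Finset.sum_sub_distrib,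
            sum_if_fst0, sum_if_pt]
          ring
        · have hv : ∀ v : BIdx m k,
              ((if v.fst = y.fst then (↑m : ℝ)⁻¹ else 0) - (if v = y then 1 else 0)) *
                ((if v.fst = x.fst ∧ v.snd = 0 then 1 else 0) - if v = x then 1 else 0)
              = 0 := by
            intro v; split_ifs <;> simp_all <;> ring
          rw [Finset.sum_congr rfl fun v _ => hv v]
          simp
end QP

section Dm
variable (m k : ℕ) [NeZero m] [NeZero k]

noncomputable def Bblk : Matrix Unit (BIdx m k) ℝ :=
  fun _ x => if x = (⟨0, 0⟩ : BIdx m k) then ((k : ℝ) * m) else 0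

noncomputable def Cblk : Matrix (BIdx m k) Unit ℝ :=
  fun x _ => if x = (⟨0, 0⟩ : BIdx m k) then 1 else 0

noncomputable def dvec : BIdx m k → ℝ := fun x =>
  if x.2 = 0 then (if x.1 = 0 then 2 * m * ((k : ℝ) - 1) else -(2 * m)) else 0

noncomputable def Dmat : Matrix (VIdx m k) (VIdx m k) ℝ :=
  Matrix.fromBlocks 0 (Bblk m k) (Cblk m k) (Matrix.diagonal (dvec m k))

variable {m k}

lemma sum_mul_ite_pt (g : BIdx m k → ℝ) (w : BIdx m k) (f : BIdx m k → ℝ) :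
    ∑ v : BIdx m k, g v * (if v = w then f v else 0) = g w * f w := by
  rw [Finset.sum_congr rfl (fun v _ => show g v * (if v = w then f v else 0)
    = if v = w then g w * f w else 0 by split_ifs with h; · subst h; rfl
                                        · exact mul_zero _)]
  exact sum_if_pt w _

set_option maxHeartbeats 2000000 in
lemma MP_eq_PD : Mmat m k * Pmat m k = Pmat m k * Dmat m k := by
  have hm0 : (m : ℝ) ≠ 0 := Nat.cast_ne_zero.mpr (NeZero.ne m)
  have hk0 : (k : ℝ) ≠ 0 := Nat.cast_ne_zero.mpr (NeZero.ne k)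
  ext u w
  rw [Matrix.mul_apply, Matrix.mul_apply, Fintype.sum_sum_type, Fintype.sum_sum_type]
  rcases u with u | y <;> rcases w with w | x
  · -- (inl, inl)
    simp [Mmat, Pmat, Dmat, Bblk, Cblk]
  · -- (inl, inr x)
    simp only [Mmat, Pmat, Dmat, Matrix.fromBlocks_apply₁₂, Matrix.fromBlocks_apply₂₂,
      Bblk, Matrix.diagonal_apply, one_mul, zero_mul, mul_zero, Finset.sum_const,
      smul_zero, zero_add, add_zero, Finset.univ_unique, Finset.sum_singleton,
      Finset.card_singleton, one_smul]
    by_cases hx2 : x.snd = 0 <;> by_cases hx1 : x.fst = 0 <;>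
      simp only [hx2, hx1, if_pos, if_neg, if_true, if_false]
    · rw [if_pos (bidx_ext_iff.mpr ⟨hx1, hx2⟩ : x = ⟨0,0⟩), sum_const_B]
      ring
    · rw [if_neg (fun h : x = ⟨0,0⟩ => hx1 (by rw [h])),
        Finset.sum_sub_distrib, sum_if_fst, sum_if_fst]
      ring
    · rw [if_neg (fun h : x = ⟨0,0⟩ => hx2 (by rw [h])),
        Finset.sum_sub_distrib, sum_if_fst0, sum_if_pt]
      ring
    · rw [if_neg (fun h : x = ⟨0,0⟩ => hx2 (by rw [h])),
        Finset.sum_sub_distrib, sum_if_fst0, sum_if_pt]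
      ring
  · -- (inr y, inl)
    simp only [Mmat, Pmat, Dmat, Matrix.fromBlocks_apply₂₁, Matrix.fromBlocks_apply₁₁,
      Cblk, Finset.univ_unique, Finset.sum_singleton, mul_zero, zero_mul,
      Finset.sum_const, smul_zero, add_zero, Matrix.zero_apply, zero_add, mul_one]
    rw [sum_mul_ite_pt _ (⟨0,0⟩ : BIdx m k) (fun _ => (1:ℝ))]
    norm_num
  · -- (inr y, inr x)
    simp only [Mmat, Pmat, Dmat, Matrix.fromBlocks_apply₁₂, Matrix.fromBlocks_apply₂₂,
      Bblk, Matrix.diagonal_apply, Finset.univ_unique, Finset.sum_singleton,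
      mul_zero, zero_mul, zero_add, add_zero]
    rw [sum_mul_ite_pt _ x (dvec m k)]
    by_cases hx2 : x.snd = 0 <;> by_cases hx1 : x.fst = 0 <;>
      simp only [dvec, hx2, hx1, if_pos, if_neg, if_true, if_false]
    · -- b2 column
      have hv : ∀ v : BIdx m k, (if y.fst = v.fst then (0:ℝ) else 2) * 1
          = 2 - (if v.fst = y.fst then (2:ℝ) else 0) := by
        intro v; split_ifs <;> simp_all
      rw [Finset.sum_congr rfl fun v _ => hv v, Finset.sum_sub_distrib,
        sum_const_B, sum_if_fst]
      ring
    · -- w column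
      by_cases hy1 : y.fst = 0 <;> by_cases hxy : y.fst = x.fst
      · exact absurd (hy1 ▸ hxy) fun h => hx1 h.symm
      · have hv : ∀ v : BIdx m k, (if y.fst = v.fst then (0:ℝ) else 2) *
            ((if v.fst = 0 then 1 else 0) - if v.fst = x.fst then 1 else 0)
            = (if v.fst = x.fst then (-2:ℝ) else 0) := by
          intro v; split_ifs <;> simp_all
        rw [Finset.sum_congr rfl fun v _ => hv v, sum_if_fst]
        clear hv
        split_ifs <;> simp_all <;> ring
      · have hv : ∀ v : BIdx m k, (if y.fst = v.fst then (0:ℝ) else 2) *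
            ((if v.fst = 0 then 1 else 0) - if v.fst = x.fst then 1 else 0)
            = (if v.fst = (0 : Fin k) then (2:ℝ) else 0) := by
          intro v; split_ifs <;> simp_all
        rw [Finset.sum_congr rfl fun v _ => hv v, sum_if_fst]
        clear hv
        split_ifs <;> simp_all <;> ring
      · have hv : ∀ v : BIdx m k, (if y.fst = v.fst then (0:ℝ) else 2) *
            ((if v.fst = 0 then 1 else 0) - if v.fst = x.fst then 1 else 0)
            = (if v.fst = (0 : Fin k) then (2:ℝ) else 0)
              - (if v.fst = x.fst then (2:ℝ) else 0) := by
          intro v; split_ifs <;> simp_all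
        rw [Finset.sum_congr rfl fun v _ => hv v, Finset.sum_sub_distrib,
          sum_if_fst, sum_if_fst]
        clear hv
        split_ifs <;> simp_all <;> ring
    · -- u column (x.fst = 0)
      by_cases hxy : y.fst = x.fst
      · have hv : ∀ v : BIdx m k, (if y.fst = v.fst then (0:ℝ) else 2) *
            ((if v.fst = 0 ∧ v.snd = 0 then 1 else 0) - if v = x then 1 else 0)
            = 0 := by
          intro v; split_ifs <;> simp_all
        rw [Finset.sum_congr rfl fun v _ => hv v]
        simp
      · have hv : ∀ v : BIdx m k, (if y.fst = v.fst then (0:ℝ) else 2) *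
            ((if v.fst = 0 ∧ v.snd = 0 then 1 else 0) - if v = x then 1 else 0)
            = (if v.fst = (0 : Fin k) ∧ v.snd = (0:Fin m) then (2:ℝ) else 0)
              - (if v = x then (2:ℝ) else 0) := by
          intro v; split_ifs <;> simp_all
        rw [Finset.sum_congr rfl fun v _ => hv v, Finset.sum_sub_distrib,
          sum_if_fst0, sum_if_pt]
        simp
    · -- u column (x.fst ≠ 0): same as previous
      by_cases hxy : y.fst = x.fst
      · have hv : ∀ v : BIdx m k, (if y.fst = v.fst then (0:ℝ) else 2) *
            ((if v.fst = x.fst ∧ v.snd = 0 then 1 else 0) - if v = x then 1 else 0)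
            = 0 := by
          intro v; split_ifs <;> simp_all
        rw [Finset.sum_congr rfl fun v _ => hv v]
        simp
      · have hv : ∀ v : BIdx m k, (if y.fst = v.fst then (0:ℝ) else 2) *
            ((if v.fst = x.fst ∧ v.snd = 0 then 1 else 0) - if v = x then 1 else 0)
            = (if v.fst = x.fst ∧ v.snd = (0:Fin m) then (2:ℝ) else 0)
              - (if v = x then (2:ℝ) else 0) := by
          intro v; split_ifs <;> simp_all
        rw [Finset.sum_congr rfl fun v _ => hv v, Finset.sum_sub_distrib,
          sum_if_fst0, sum_if_pt]
        simp
end Dm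

section Conj

open Matrix in
lemma charpoly_conj {n : Type*} [Fintype n] [DecidableEq n] {R : Type*} [CommRing R]
    (M P Q : Matrix n n R) (h : Q * P = 1) : (Q * M * P).charpoly = M.charpoly := by
  classical
  set f : R →+* R[X] := (C : R →+* R[X]) with hf
  have hQP : (Q.map f) * (P.map f) = 1 := by
    rw [← Matrix.map_mul, h]
    ext i j
    simp [Matrix.one_apply, apply_ite f]
  have hchar : charmatrix (Q * M * P) = (Q.map f) * charmatrix M * (P.map f) := by
    unfold charmatrix
    simp only [RingHom.mapMatrix_apply]
    rw [Matrix.map_mul, Matrix.map_mul, Matrix.mul_sub, Matrix.sub_mul]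
    congr 1
    refine Eq.symm ?_
    have hc : (scalar n (X : R[X])) * (P.map f) = (P.map f) * (scalar n (X : R[X])) :=
      (scalar_commute (X : R[X]) (fun r' => Commute.all _ _) (P.map f)).eq
    calc Q.map f * scalar n (X : R[X]) * P.map f
        = Q.map f * (scalar n (X : R[X]) * P.map f) := by rw [Matrix.mul_assoc]
      _ = Q.map f * (P.map f * scalar n (X : R[X])) := by rw [hc]
      _ = (Q.map f * P.map f) * scalar n (X : R[X]) := by rw [Matrix.mul_assoc]
      _ = scalar n (X : R[X]) := by rw [hQP, Matrix.one_mul]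
  unfold Matrix.charpoly
  rw [hchar, Matrix.det_mul, Matrix.det_mul]
  have hdet : (Q.map f).det * (P.map f).det = 1 := by
    rw [← Matrix.det_mul, hQP, Matrix.det_one]
  calc (Q.map f).det * (charmatrix M).det * (P.map f).det
      = (charmatrix M).det * ((Q.map f).det * (P.map f).det) := by ring
    _ = (charmatrix M).det := by rw [hdet, mul_one]

end Conj

section CharD
variable {m k : ℕ} [NeZero m] [NeZero k]

lemma Mmat_charpoly_eq_Dmat : (Mmat m k).charpoly = (Dmat m k).charpoly := by
  have h1 : Qmat m k * Mmat m k * Pmat m k = Dmat m k := by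
    rw [Matrix.mul_assoc, MP_eq_PD, ← Matrix.mul_assoc, QP_eq_one, Matrix.one_mul]
  rw [← charpoly_conj (Mmat m k) (Pmat m k) (Qmat m k) QP_eq_one, h1]

end CharD

section CharDet
variable {m k : ℕ} [NeZero m] [NeZero k]

lemma charmatrix_diagonal' {n : Type*} [Fintype n] [DecidableEq n] {R : Type*} [CommRing R]
    (d : n → R) :
    Matrix.charmatrix (Matrix.diagonal d) = Matrix.diagonal (fun i => (X : R[X]) - C (d i)) := by
  ext i j
  by_cases h : i = j
  · subst h; simp [Matrix.charmatrix_apply_eq]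
  · rw [Matrix.charmatrix_apply_ne _ _ _ h]
    simp [Matrix.diagonal_apply_ne _ h, Matrix.diagonal_apply_ne _ h]

lemma prod_X_sub_dvec :
    ∏ x : BIdx m k, ((X : ℝ[X]) - C (dvec m k x)) =
      (X - C (2 * (m:ℝ) * ((k:ℝ) - 1))) * (X + C (2 * (m:ℝ))) ^ (k - 1) * X ^ (k * (m - 1)) := by
  rw [← Finset.univ_sigma_univ, Finset.prod_sigma]
  have hinner : ∀ i : Fin k, (∏ j : Fin m, ((X:ℝ[X]) - C (dvec m k ⟨i, j⟩)))
      = (X - C (if i = 0 then 2 * (m:ℝ) * ((k:ℝ) - 1) else -(2 * (m:ℝ)))) * X ^ (m - 1) := by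
    intro i
    have h2 : ∀ j ∈ Finset.univ.erase (0 : Fin m), ((X:ℝ[X]) - C (dvec m k ⟨i, j⟩)) = X := by
      intro j hj
      have : dvec m k ⟨i, j⟩ = 0 := by
        simp [dvec, (Finset.mem_erase.mp hj).1]
      rw [this, map_zero, sub_zero]
    rw [← Finset.mul_prod_erase Finset.univ _ (Finset.mem_univ (0 : Fin m)),
      Finset.prod_congr rfl h2, Finset.prod_const,
      Finset.card_erase_of_mem (Finset.mem_univ _), Finset.card_univ, Fintype.card_fin]
    congr 2 <;> simp [dvec]
  simp only [hinner]
  rw [Finset.prod_mul_distrib, Finset.prod_const, Finset.card_univ, Fintype.card_fin,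
    ← pow_mul, mul_comm (m - 1) k]
  congr 1
  · rw [← Finset.mul_prod_erase Finset.univ _ (Finset.mem_univ (0 : Fin k))]
    rw [if_pos rfl]
    congr 1
    have h2 : ∀ i ∈ Finset.univ.erase (0 : Fin k),
        ((X:ℝ[X]) - C (if i = 0 then 2 * (m:ℝ) * ((k:ℝ) - 1) else -(2 * (m:ℝ))))
          = X + C (2 * (m:ℝ)) := by
      intro i hi
      rw [if_neg (Finset.mem_erase.mp hi).1, map_neg, sub_neg_eq_add]
    rw [Finset.prod_congr rfl h2, Finset.prod_const,
      Finset.card_erase_of_mem (Finset.mem_univ _), Finset.card_univ, Fintype.card_fin]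

set_option maxHeartbeats 1000000 in
lemma Dmat_charpoly :
    (Dmat m k).charpoly =
      ((X:ℝ[X])^2 - C (2 * (m:ℝ) * ((k:ℝ) - 1)) * X - C ((k:ℝ) * m)) *
        (X + C (2 * (m:ℝ))) ^ (k - 1) * X ^ (k * (m - 1)) := by
  set F := FractionRing ℝ[X]
  have hinj : Function.Injective (algebraMap ℝ[X] F) := IsFractionRing.injective ℝ[X] F
  apply hinj
  set φ : ℝ[X] →+* F := (algebraMap ℝ[X] F : ℝ[X] →+* F) with hφ
  -- LHS
  unfold Matrix.charpoly
  rw [RingHom.map_det]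
  unfold Dmat
  rw [Matrix.charmatrix_fromBlocks, RingHom.mapMatrix_apply, Matrix.fromBlocks_map, charmatrix_diagonal',
    Matrix.diagonal_map (by simp)]
  set g : BIdx m k → F := fun x => φ ((X:ℝ[X]) - C (dvec m k x)) with hg
  have hg0 : ∀ x, g x ≠ 0 := by
    intro x
    simp only [hg]
    intro hc
    exact X_sub_C_ne_zero (dvec m k x) (hinj (by simpa using hc))
  have hDg : Matrix.diagonal g * Matrix.diagonal (fun x => (g x)⁻¹) = 1 := by
    have hfun : (fun x => g x * (g x)⁻¹) = fun _ => (1 : F) :=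
      funext fun x => mul_inv_cancel₀ (hg0 x)
    rw [Matrix.diagonal_mul_diagonal, hfun, Matrix.diagonal_one]
  haveI : Invertible (Matrix.diagonal g) := invertibleOfRightInverse _ _ hDg
  rw [Matrix.det_fromBlocks₂₂]
  rw [invOf_eq_right_inv hDg, Matrix.det_diagonal, Matrix.det_unique]
  have hprod : ∏ x : BIdx m k, g x =
      φ ((X - C (2*(m:ℝ)*((k:ℝ)-1))) * (X + C (2*(m:ℝ)))^(k-1) * X^(k*(m-1))) := by
    rw [← prod_X_sub_dvec]
    exact (map_prod φ _ _).symm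
  rw [hprod]
  simp only [Matrix.sub_apply, Matrix.mul_apply, Matrix.mul_diagonal, Matrix.map_apply,
    Matrix.neg_apply, Matrix.charmatrix_apply_eq, Matrix.zero_apply, map_zero, sub_zero,
    map_neg, neg_mul, mul_neg, neg_neg, Bblk, Cblk]
  have hin : ∀ x : BIdx m k,
      (∑ y : BIdx m k, -(φ (Polynomial.C (if y = (⟨0, 0⟩ : BIdx m k) then (k:ℝ) * m else 0)) *
          Matrix.diagonal (fun v => (g v)⁻¹) y x))
      = -(φ (Polynomial.C (if x = (⟨0, 0⟩ : BIdx m k) then (k:ℝ) * m else 0)) * (g x)⁻¹) := by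
    intro x
    have hpt : ∀ y : BIdx m k,
        -(φ (Polynomial.C (if y = (⟨0, 0⟩ : BIdx m k) then (k:ℝ) * m else 0)) *
            Matrix.diagonal (fun v => (g v)⁻¹) y x)
        = if y = x then
            -(φ (Polynomial.C (if x = (⟨0, 0⟩ : BIdx m k) then (k:ℝ) * m else 0)) * (g x)⁻¹)
          else 0 := by
      intro y
      rw [Matrix.diagonal_apply]
      split_ifs with h1 h2 h2 <;> first | (subst h1; simp_all) | simp_all
    rw [Finset.sum_congr rfl fun y _ => hpt y]
    simp [Finset.sum_ite_eq']
  simp +zetaDelta only [neg_mul, mul_neg, neg_neg]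
  rw [Finset.sum_congr rfl fun x (_ : x ∈ Finset.univ) => by rw [hin x]]
  have hout : ∀ x : BIdx m k,
      -(-(φ (Polynomial.C (if x = (⟨0, 0⟩ : BIdx m k) then (k:ℝ) * m else 0)) * (g x)⁻¹) *
          φ (Polynomial.C (if x = (⟨0, 0⟩ : BIdx m k) then (1:ℝ) else 0)))
      = if x = (⟨0, 0⟩ : BIdx m k) then φ (Polynomial.C ((k:ℝ) * m)) * (g ⟨0, 0⟩)⁻¹ else 0 := by
    intro x
    split_ifs with h1
    · subst h1; simp +zetaDelta
    · simp [h1]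
  rw [Finset.sum_congr rfl fun x (_ : x ∈ Finset.univ) => hout x, Finset.sum_ite_eq'
    Finset.univ (⟨0, 0⟩ : BIdx m k) (fun _ => φ (Polynomial.C ((k:ℝ) * m)) * (g ⟨0, 0⟩)⁻¹)]
  have hx0 : g (⟨0, 0⟩ : BIdx m k) = φ ((X : ℝ[X]) - C (2 * (m:ℝ) * ((k:ℝ) - 1))) := by
    simp [hg, dvec]
  have hA : φ ((X : ℝ[X]) - C (2 * (m:ℝ) * ((k:ℝ) - 1))) ≠ 0 := hx0 ▸ hg0 ⟨0, 0⟩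
  rw [hx0]
  simp +zetaDelta only [Finset.mem_univ, if_true, map_mul φ]
  have h1 : φ ((X : ℝ[X]) - C (2 * (m:ℝ) * ((k:ℝ) - 1))) *
      (φ (Polynomial.C ((k:ℝ) * m)) * (φ ((X : ℝ[X]) - C (2 * (m:ℝ) * ((k:ℝ) - 1))))⁻¹)
      = φ (Polynomial.C ((k:ℝ) * m)) := by
    rw [mul_comm (φ (Polynomial.C ((k:ℝ) * m))) _, ← mul_assoc, mul_inv_cancel₀ hA, one_mul]
  have key : φ ((X : ℝ[X]) - C (2 * (m:ℝ) * ((k:ℝ) - 1))) *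
      (φ (X : ℝ[X]) - φ (Polynomial.C ((k:ℝ) * m)) *
        (φ ((X : ℝ[X]) - C (2 * (m:ℝ) * ((k:ℝ) - 1))))⁻¹)
      = φ ((X:ℝ[X]) ^ 2 - C (2 * (m:ℝ) * ((k:ℝ) - 1)) * X - C ((k:ℝ) * m)) := by
    rw [mul_sub, h1, ← map_mul, ← map_sub]
    congr 1
    ring
  linear_combination (φ (((X:ℝ[X]) + C (2 * (m:ℝ))) ^ (k - 1)) *
    φ ((X:ℝ[X]) ^ (k * (m - 1)))) * key

end CharDet

theorem stmt19' (m k : ℕ) (hm : 2 ≤ m) (hk : 2 ≤ k) :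
    (eccMatrix (graphJoin (⊤ : SimpleGraph Unit)
        (blocksGraph (fun _ : Fin k => m) (fun _ => True)))).charpoly =
      (X + C (2 * (m : ℝ))) ^ (k - 1) * X ^ (k * (m - 1)) *
        (X - C ((m : ℝ) * ((k : ℝ) - 1) -
          Real.sqrt ((m : ℝ) ^ 2 * ((k : ℝ) - 1) ^ 2 + (k : ℝ) * (m : ℝ)))) *
        (X - C ((m : ℝ) * ((k : ℝ) - 1) +
          Real.sqrt ((m : ℝ) ^ 2 * ((k : ℝ) - 1) ^ 2 + (k : ℝ) * (m : ℝ)))) := by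
  haveI : NeZero m := ⟨by omega⟩
  haveI : NeZero k := ⟨by omega⟩
  have hG : eccMatrix (graphJoin (⊤ : SimpleGraph Unit)
      (blocksGraph (fun _ : Fin k => m) (fun _ => True))) = Mmat m k := eccMatrix_eq hm hk
  rw [hG, Mmat_charpoly_eq_Dmat, Dmat_charpoly]
  set s : ℝ := Real.sqrt ((m : ℝ) ^ 2 * ((k : ℝ) - 1) ^ 2 + (k : ℝ) * (m : ℝ)) with hsdef
  set a : ℝ := (m : ℝ) * ((k : ℝ) - 1) with hadef
  have hs : s ^ 2 = (m : ℝ) ^ 2 * ((k : ℝ) - 1) ^ 2 + (k : ℝ) * (m : ℝ) := by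
    rw [hsdef]
    exact Real.sq_sqrt (by positivity)
  have hsum : (a - s) + (a + s) = 2 * (m : ℝ) * ((k : ℝ) - 1) := by rw [hadef]; ring
  have hprod : (a - s) * (a + s) = -((k : ℝ) * m) := by
    have h2 : (a - s) * (a + s) = a ^ 2 - s ^ 2 := by ring
    rw [h2, hs, hadef]; ring
  have hquad : ((X : ℝ[X]) - C (a - s)) * (X - C (a + s))
      = X ^ 2 - C (2 * (m : ℝ) * ((k : ℝ) - 1)) * X - C ((k : ℝ) * m) := by
    have hexp : ((X : ℝ[X]) - C (a - s)) * (X - C (a + s))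
        = X ^ 2 - (C (a - s) + C (a + s)) * X + C (a - s) * C (a + s) := by ring
    rw [hexp, ← C_add, ← C_mul, hsum, hprod, map_neg]
    ring
  rw [← hquad]
  ring

/-- the eccentricity spectrum of the windmill graph `W_{m+1}^k` (the join of a
single vertex with `k` disjoint copies of `K_m`): eigenvalue `-2m` with multiplicity `k-1`,
eigenvalue `0` with multiplicity `k(m-1)`, and the two simple eigenvalues
`m(k-1) ∓ √(m²(k-1)² + km)`, expressed via the characteristic polynomial. -/
theorem stmt19 (m k : ℕ) (hm : 2 ≤ m) (hk : 2 ≤ k) :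
    (eccMatrix (graphJoin (⊤ : SimpleGraph Unit)
        (blocksGraph (fun _ : Fin k => m) (fun _ => True)))).charpoly =
      (X + C (2 * (m : ℝ))) ^ (k - 1) * X ^ (k * (m - 1)) *
        (X - C ((m : ℝ) * ((k : ℝ) - 1) -
          Real.sqrt ((m : ℝ) ^ 2 * ((k : ℝ) - 1) ^ 2 + (k : ℝ) * (m : ℝ)))) *
        (X - C ((m : ℝ) * ((k : ℝ) - 1) +
          Real.sqrt ((m : ℝ) ^ 2 * ((k : ℝ) - 1) ^ 2 + (k : ℝ) * (m : ℝ)))) :=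
  stmt19' m k hm hk
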